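/- arXiv:1404.2156 — 6 statements merged into one kernel-verified Lean document; each statement's English description precedes it below -/
import Mathlib

section
/- Let C be a quasicategory and let D be a simplicial subset of C having at most countably many m-simplices for each m. Then there exists a simplicial subset D₁ with D ⊆ D₁ ⊆ C such that D₁ has at most countably many m-simplices for each m and D₁ is itself a quasicategory. -/
open CategoryTheory Simplicial Opposite SSet

instance SimplexCategory.finiteHom (a b : SimplexCategory) : Finite (a ⟶ b) :=
  Finite.of_injective (fun f => (f.toOrderHom : Fin (a.len+1) → Fin (b.len+1)))
    (fun _ _ h => SimplexCategory.Hom.ext _ _ (OrderHom.ext _ _ h))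

instance stdFinite (n : ℕ) (m : SimplexCategoryᵒᵖ) : Finite (Δ[n].obj m) :=
  Finite.of_equiv _ SSet.stdSimplex.objEquiv.symm

instance hornFinite (n : ℕ) (i : Fin (n+1)) (m : SimplexCategoryᵒᵖ) :
    Finite ((Λ[n, i] : SSet).obj m) :=
  Subtype.finite

/-- Every simplex of a horn factors through a simplex of dimension `< n`. -/
lemma horn_factor {n : ℕ} {i : Fin (n+1)} {m : SimplexCategoryᵒᵖ}
    (α : (Λ[n, i] : SSet).obj m) :
    ∃ (k : ℕ) (_ : k < n) (β : (Λ[n, i] : SSet).obj (op (SimplexCategory.mk k)))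
      (e : m.unop ⟶ SimplexCategory.mk k), α = (Λ[n, i] : SSet).map e.op β := by
  obtain ⟨α, hα⟩ := α
  set φ := SSet.stdSimplex.objEquiv α with hφ
  obtain ⟨c, e, ι, hesurj, hιinj, fac⟩ :
      ∃ (c : SimplexCategory) (e : m.unop ⟶ c) (ι : c ⟶ SimplexCategory.mk n),
        Function.Surjective e.toOrderHom ∧ Function.Injective ι.toOrderHom ∧ e ≫ ι = φ :=
    ⟨Limits.image φ, Limits.factorThruImage φ, Limits.image.ι φ,
      SimplexCategory.epi_iff_surjective.mp inferInstance,
      SimplexCategory.mono_iff_injective.mp inferInstance, Limits.image.fac φ⟩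
  have hcomp : (φ.toOrderHom : Fin _ → Fin _) = ι.toOrderHom ∘ e.toOrderHom := by
    have := congrArg (fun f => (SimplexCategory.Hom.toOrderHom f : Fin _ → Fin _)) fac
    exact this.symm
  have hrange : Set.range φ.toOrderHom = Set.range ι.toOrderHom := by
    rw [hcomp, Set.range_comp, Set.range_eq_univ.mpr hesurj, Set.image_univ]
  obtain ⟨j, hj⟩ := Set.ne_univ_iff_exists_notMem _ |>.mp hα
  have hjι : j ∉ Set.range ι.toOrderHom := by
    intro h
    exact hj (Or.inl (by
      rwa [show Set.range (stdSimplex.asOrderHom α) = Set.range φ.toOrderHom from rfl, hrange]))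
  have hcard : c.len + 1 < n + 1 := by
    simpa using Fintype.card_lt_of_injective_of_notMem _ hιinj hjι
  have hβmem : Set.range (stdSimplex.asOrderHom (SSet.stdSimplex.objEquiv.symm ι)) ∪ {i}
      ≠ Set.univ := by
    intro h
    apply hα
    rw [show Set.range (stdSimplex.asOrderHom α) = Set.range φ.toOrderHom from rfl, hrange]
    exact h
  refine ⟨c.len, Nat.lt_of_succ_lt_succ hcard,
    ⟨SSet.stdSimplex.objEquiv.symm ι, hβmem⟩, e, ?_⟩
  apply Subtype.ext
  show α = Δ[n].map e.op (SSet.stdSimplex.objEquiv.symm ι)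
  rw [SSet.stdSimplex.map_apply]
  apply SSet.stdSimplex.objEquiv.injective
  simp [fac]
  rfl


/-- A map out of a horn is determined by its values on simplices of dimension `< n`. -/
lemma horn_hom_ext'' {n : ℕ} {i : Fin (n+1)} {X : SSet} {f g : (Λ[n, i] : SSet) ⟶ X}
    (h : ∀ (k : ℕ), k < n → f.app (op (SimplexCategory.mk k)) = g.app (op (SimplexCategory.mk k))) :
    f = g := by
  ext m α
  obtain ⟨k, hk, β, e, rfl⟩ := horn_factor α
  change f.app m (Λ[n, i].toSSet.map e.op β) = g.app m (Λ[n, i].toSSet.map e.op β)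
  rw [FunctorToTypes.naturality, FunctorToTypes.naturality, h k hk]

lemma horn_app_mem {n : ℕ} {i : Fin (n+1)} {C : SSet} (τ : (Λ[n, i] : SSet) ⟶ C)
    (E : Subfunctor C)
    (h : ∀ (k : ℕ) (_ : k < n) (β : (Λ[n, i] : SSet).obj (op (SimplexCategory.mk k))),
      τ.app _ β ∈ E.obj _) (m : SimplexCategoryᵒᵖ) (α : (Λ[n, i] : SSet).obj m) :
    τ.app m α ∈ E.obj m := by
  obtain ⟨k, hk, β, e, rfl⟩ := horn_factor α
  rw [FunctorToTypes.naturality]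
  exact E.map e.op (h k hk β)

/-- Countability of the set of horn maps into a levelwise countable simplicial set. -/
lemma horn_hom_countable {n : ℕ} {i : Fin (n+1)} (X : SSet)
    [hX : ∀ m, Countable (X.obj m)] : Countable ((Λ[n, i] : SSet) ⟶ X) := by
  have hinj : Function.Injective (fun (f : (Λ[n, i] : SSet) ⟶ X) =>
      (fun k : Fin n => ⇑(f.app (op (SimplexCategory.mk k.1))))) := by
    intro f g h
    apply horn_hom_ext''
    intro k hk
    ext x
    exact congrFun (congrFun h ⟨k, hk⟩) x
  haveI : Countable ((k : Fin n) → ((Λ[n, i] : SSet).obj (op (SimplexCategory.mk k.1)) →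
      X.obj (op (SimplexCategory.mk k.1)))) :=
    inferInstanceAs (Countable ((k : Fin n) → ((Λ[n, i] : SSet).obj (op (SimplexCategory.mk k.1)) →
      X.obj (op (SimplexCategory.mk k.1)))))
  exact Function.Injective.countable hinj

namespace CSQ

open GrothendieckTopology

variable (C : SSet) [SSet.Quasicategory C]

/-- A horn-filling problem for a subpresheaf `E` of `C`. -/
structure Idx (E : Subfunctor C) : Type _ where
  n : ℕ
  i : Fin (n+1)
  h0 : 0 < i
  hn : i < Fin.last n
  f : (Λ[n, i] : SSet) ⟶ E.toFunctor

lemma idx_countable {E : Subfunctor C} (hE : ∀ m, (E.obj m).Countable) :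
    Countable (Idx C E) := by
  haveI : ∀ m, Countable (E.toFunctor.obj m) := fun m => (hE m).to_subtype
  haveI : ∀ (n : ℕ) (i : Fin (n+1)), Countable ((Λ[n, i] : SSet) ⟶ E.toFunctor) :=
    fun n i => horn_hom_countable E.toFunctor
  have hinj : Function.Injective (fun x : Idx C E =>
      (⟨x.n, x.i, x.f⟩ : Σ (n : ℕ) (i : Fin (n+1)), ((Λ[n, i] : SSet) ⟶ E.toFunctor))) := by
    rintro ⟨n, i, h0, hn, f⟩ ⟨n', i', h0', hn', f'⟩ h
    obtain ⟨rfl, h⟩ := Sigma.mk.inj_iff.mp h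
    obtain ⟨rfl, h⟩ := Sigma.mk.inj_iff.mp (eq_of_heq h)
    obtain rfl : f = f' := eq_of_heq h
    rfl
  exact Function.Injective.countable hinj

/-- A chosen filler for each horn-filling problem. -/
noncomputable def filler {E : Subfunctor C} (x : Idx C E) : Δ[x.n] ⟶ C :=
  (SSet.Quasicategory.hornFilling x.h0 x.hn (x.f ≫ E.ι)).choose

lemma filler_spec {E : Subfunctor C} (x : Idx C E) :
    x.f ≫ E.ι = Λ[x.n, x.i].ι ≫ filler C x :=
  (SSet.Quasicategory.hornFilling x.h0 x.hn (x.f ≫ E.ι)).choose_spec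

/-- One step of saturation: throw in fillers of all horns of `E`. -/
noncomputable def next (E : Subfunctor C) : Subfunctor C where
  obj m := E.obj m ∪ ⋃ (x : Idx C E), Set.range ((filler C x).app m)
  map := by
    rintro U V φ y (hy | hy)
    · exact Or.inl (E.map φ hy)
    · rw [Set.mem_iUnion] at hy
      obtain ⟨x, hx⟩ := hy
      exact Or.inr (Set.mem_iUnion.mpr ⟨x, (Subfunctor.range (filler C x)).map φ hx⟩)

lemma le_next (E : Subfunctor C) : E ≤ next C E := fun _ _ hy => Or.inl hy

lemma next_countable {E : Subfunctor C} (hE : ∀ m, (E.obj m).Countable) :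
    ∀ m, ((next C E).obj m).Countable := by
  intro m
  haveI := idx_countable C hE
  exact (hE m).union (Set.countable_iUnion (fun x => Set.countable_range _))

variable (D : Subfunctor C)

/-- The tower of saturations of `D`. -/
noncomputable def seq : ℕ → Subfunctor C :=
  fun k => Nat.rec D (fun _ E => next C E) k

lemma seq_mono : Monotone (seq C D) :=
  monotone_nat_of_le_succ (fun k => le_next C (seq C D k))

/-- The union of the tower. -/
noncomputable def limitSub : Subfunctor C where
  obj m := ⋃ k, (seq C D k).obj m
  map := by
    rintro U V φ y hy
    rw [Set.mem_iUnion] at hy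
    obtain ⟨k, hk⟩ := hy
    exact Set.mem_iUnion.mpr ⟨k, (seq C D k).map φ hk⟩

lemma le_limitSub : D ≤ limitSub C D := fun m y hy => Set.mem_iUnion.mpr ⟨0, hy⟩

lemma seq_le_limitSub (k : ℕ) : seq C D k ≤ limitSub C D :=
  fun m y hy => Set.mem_iUnion.mpr ⟨k, hy⟩

lemma limitSub_countable (hD : ∀ m, (D.obj m).Countable) :
    ∀ m, ((limitSub C D).obj m).Countable := by
  have hseq : ∀ k m, ((seq C D k).obj m).Countable := by
    intro k
    induction k with
    | zero => exact hD
    | succ k ih => exact next_countable C ih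
  exact fun m => Set.countable_iUnion (fun k => hseq k m)

lemma limitSub_quasicategory : SSet.Quasicategory (limitSub C D).toFunctor := by
  constructor
  intro n i σ₀ h0 hn
  -- every simplex of the horn lands in some finite stage; find a common stage `K`
  have key : ∀ p : (Σ k : Fin (n+2), (Λ[n+2, i] : SSet).obj (op (SimplexCategory.mk k.1))),
      ∃ K : ℕ, (σ₀.app _ p.2).1 ∈ (seq C D K).obj _ := by
    intro p
    have := (σ₀.app _ p.2).2
    exact Set.mem_iUnion.mp this
  choose κ hκ using key
  obtain ⟨K, hK⟩ : ∃ K, ∀ p, κ p ≤ K := by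
    obtain ⟨K, hK⟩ := (Set.finite_range κ).bddAbove
    exact ⟨K, fun p => hK ⟨p, rfl⟩⟩
  have hmem : ∀ m α, (σ₀ ≫ (limitSub C D).ι).app m α ∈ (seq C D K).obj m := by
    apply horn_app_mem
    intro k hk β
    exact seq_mono C D (hK ⟨⟨k, hk⟩, β⟩) _ (hκ ⟨⟨k, hk⟩, β⟩)
  -- factor σ₀ through stage K
  let σ₀' : (Λ[n+2, i] : SSet) ⟶ (seq C D K).toFunctor :=
    Subfunctor.lift (σ₀ ≫ (limitSub C D).ι) (by rintro m _ ⟨α, rfl⟩; exact hmem m α)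
  let x : Idx C (seq C D K) := ⟨n+2, i, h0, hn, σ₀'⟩
  have himg : Subfunctor.range (filler C x) ≤ limitSub C D := by
    refine le_trans ?_ (seq_le_limitSub C D (K+1))
    intro m y hy
    exact Or.inr (Set.mem_iUnion.mpr ⟨x, hy⟩)
  refine ⟨Subfunctor.lift (filler C x) himg, ?_⟩
  ext m α
  apply Subtype.ext
  have := congrArg (fun f : (Λ[x.n, x.i] : SSet) ⟶ C => NatTrans.app f m α) (filler_spec C x)
  exact this

end CSQ

open CategoryTheory

/-- Any countable simplicial subset of a quasicategory is contained in a countable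
simplicial subset which is itself a quasicategory. -/
theorem countable_sub_quasicategory_of_countable (C : SSet) [SSet.Quasicategory C]
    (D : Subfunctor C)
    (hD : ∀ n : SimplexCategoryᵒᵖ, (D.obj n).Countable) :
    ∃ D₁ : Subfunctor C,
      D ≤ D₁ ∧ (∀ n : SimplexCategoryᵒᵖ, (D₁.obj n).Countable) ∧
      SSet.Quasicategory D₁.toFunctor := by
  exact ⟨CSQ.limitSub C D, CSQ.le_limitSub C D, CSQ.limitSub_countable C D hD,
    CSQ.limitSub_quasicategory C D⟩
end

section
/- Let G and G' be profinite groups and let φ₁, φ₂ : G → G' be continuous group homomorphisms. Suppose that for every open normal subgroup N of G', the composites of φ₁ and φ₂ with the quotient map G' → G'/N are conjugate in G'/N. Then φ₁ and φ₂ are conjugate in G': there exists x ∈ G' with φ₂(g) = x·φ₁(g)·x⁻¹ for all g ∈ G. -/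
/-- Two continuous homomorphisms of profinite groups which become conjugate in every
finite quotient of the target are conjugate. -/
theorem conj_of_forall_quotient_conj {G G' : Type*}
    [Group G] [TopologicalSpace G] [IsTopologicalGroup G]
    [CompactSpace G] [T2Space G] [TotallyDisconnectedSpace G]
    [Group G'] [TopologicalSpace G'] [IsTopologicalGroup G']
    [CompactSpace G'] [T2Space G'] [TotallyDisconnectedSpace G']
    (φ₁ φ₂ : G →* G') (hφ₁ : Continuous φ₁) (hφ₂ : Continuous φ₂)
    (h : ∀ (N : Subgroup G') [N.Normal], IsOpen (N : Set G') →
      ∃ x : G' ⧸ N, ∀ g : G,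
        QuotientGroup.mk' N (φ₂ g) = x * QuotientGroup.mk' N (φ₁ g) * x⁻¹) :
    ∃ x : G', ∀ g : G, φ₂ g = x * φ₁ g * x⁻¹ := by
  classical
  set C : OpenNormalSubgroup G' → Set G' :=
    fun N => {x | ∀ g : G, (φ₂ g)⁻¹ * (x * φ₁ g * x⁻¹) ∈ N.toSubgroup} with hC
  have hclosed : ∀ N, IsClosed (C N) := by
    intro N
    have : C N = ⋂ g : G,
        (fun x : G' => (φ₂ g)⁻¹ * (x * φ₁ g * x⁻¹)) ⁻¹' (N.toSubgroup : Set G') := by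
      ext x; simp [hC, Set.mem_iInter]
    rw [this]
    refine isClosed_iInter fun g => IsClosed.preimage (by continuity)
      (N.toOpenSubgroup.isClosed)
  have hne : ∀ N, (C N).Nonempty := by
    intro N
    obtain ⟨xbar, hx⟩ := h N.toSubgroup N.isOpen'
    obtain ⟨x, rfl⟩ := QuotientGroup.mk'_surjective N.toSubgroup xbar
    refine ⟨x, fun g => ?_⟩
    have := hx g
    rw [← QuotientGroup.eq]
    simpa [QuotientGroup.mk'_apply] using this
  have hdir : Directed (· ⊇ ·) C := by
    intro N M
    refine ⟨N ⊓ M, fun x hx g => ?_, fun x hx g => ?_⟩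
    · exact (hx g).1
    · exact (hx g).2
  have hcompact : ∀ N, IsCompact (C N) := fun N => (hclosed N).isCompact
  have : Nonempty (OpenNormalSubgroup G') := ⟨{ toOpenSubgroup := ⊤, isNormal' := by rw [show ((⊤ : OpenSubgroup G').toSubgroup) = ⊤ from rfl]; infer_instance }⟩
  obtain ⟨x, hx⟩ := IsCompact.nonempty_iInter_of_directed_nonempty_isCompact_isClosed
    C hdir hne hcompact hclosed
  refine ⟨x, fun g => ?_⟩
  have hmem : ∀ N : OpenNormalSubgroup G', (φ₂ g)⁻¹ * (x * φ₁ g * x⁻¹) ∈ N.toSubgroup :=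
    fun N => (Set.mem_iInter.mp hx N) g
  have : (φ₂ g)⁻¹ * (x * φ₁ g * x⁻¹) = 1 := by
    by_contra hne1
    have : TotallySeparatedSpace G' := loc_compact_t2_tot_disc_iff_tot_sep.mp ‹_›
    obtain ⟨U, hU, h1U, hyU⟩ :=
      exists_isClopen_of_totally_separated (Ne.symm hne1)
    obtain ⟨N, hN⟩ :=
      IsTopologicalGroup.exist_openNormalSubgroup_sub_clopen_nhds_of_one hU h1U
    exact hyU (hN (hmem N))
  calc φ₂ g = φ₂ g * ((φ₂ g)⁻¹ * (x * φ₁ g * x⁻¹)) := by rw [this]; group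
    _ = x * φ₁ g * x⁻¹ := by group
end

section
/- Let G and G' be profinite groups. Suppose that for every open normal subgroup N of G' we are given a continuous group homomorphism φ_N : G → G'/N, and that these are compatible up to conjugacy: whenever N ⊆ M are open normal subgroups of G', the composite of φ_N with the canonical projection G'/N → G'/M is conjugate in G'/M to φ_M. Then there exists a continuous group homomorphism φ : G → G' such that for every open normal subgroup N of G', the composite of φ with the quotient map G' → G'/N is conjugate in G'/N to φ_N. -/
open CategoryTheory


/-- Given a family of continuous homomorphisms from a profinite group `G` to the finite
quotients of a profinite group `G'`, compatible up to conjugacy, there is a continuous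
homomorphism `G → G'` inducing each member of the family up to conjugacy. -/
theorem exists_lift_of_compatible_up_to_conj {G G' : Type*}
    [Group G] [TopologicalSpace G] [IsTopologicalGroup G]
    [CompactSpace G] [T2Space G] [TotallyDisconnectedSpace G]
    [Group G'] [TopologicalSpace G'] [IsTopologicalGroup G']
    [CompactSpace G'] [T2Space G'] [TotallyDisconnectedSpace G']
    (φ : ∀ (N : Subgroup G') [N.Normal], IsOpen (N : Set G') → (G →* G' ⧸ N))
    (hcont : ∀ (N : Subgroup G') [N.Normal] (hN : IsOpen (N : Set G')),
      Continuous (φ N hN))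
    (hcompat : ∀ (N M : Subgroup G') [N.Normal] [M.Normal]
      (hN : IsOpen (N : Set G')) (hM : IsOpen (M : Set G')) (hNM : N ≤ M),
      ∃ x : G' ⧸ M, ∀ g : G,
        QuotientGroup.map N M (MonoidHom.id G') (by simpa using hNM) (φ N hN g) =
          x * (φ M hM g) * x⁻¹) :
    ∃ ψ : G →* G', Continuous ψ ∧
      ∀ (N : Subgroup G') [N.Normal] (hN : IsOpen (N : Set G')),
        ∃ x : G' ⧸ N, ∀ g : G,
          QuotientGroup.mk' N (ψ g) = x * (φ N hN g) * x⁻¹ := by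
  classical
  haveI : Nonempty (OpenNormalSubgroup G') :=
    ⟨{ toOpenSubgroup := ⊤, isNormal' := ⟨fun n _ g => trivial⟩ }⟩
  have hO : ∀ N : OpenNormalSubgroup G', IsOpen (N.toSubgroup : Set G') :=
    fun N => N.toOpenSubgroup.isOpen
  have hCl : ∀ N : OpenNormalSubgroup G', IsClosed (N.toSubgroup : Set G') :=
    fun N => N.toOpenSubgroup.isClosed
  haveI hFin : ∀ N : OpenNormalSubgroup G', Finite (G' ⧸ N.toSubgroup) :=
    fun N => inferInstanceAs (Finite (G' ⧸ N.toOpenSubgroup.toSubgroup))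
  haveI hDisc : ∀ N : OpenNormalSubgroup G', DiscreteTopology (G' ⧸ N.toSubgroup) :=
    fun N => inferInstanceAs (DiscreteTopology (G' ⧸ N.toOpenSubgroup.toSubgroup))
  -- a basis of open normal subgroups at 1
  have basis : ∀ {U : Set G'}, IsOpen U → (1 : G') ∈ U →
      ∃ H : OpenNormalSubgroup G', (H.toSubgroup : Set G') ⊆ U := by
    intro U hU h1
    obtain ⟨W, hW, h1W, hWU⟩ := compact_exists_isClopen_in_isOpen hU h1
    obtain ⟨H, hH⟩ := IsTopologicalGroup.exist_openNormalSubgroup_sub_clopen_nhds_of_one hW h1W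
    exact ⟨H, fun x hx => hWU (hH hx)⟩
  -- separation
  have sep : ∀ a : G', (∀ N : OpenNormalSubgroup G', a ∈ N.toSubgroup) → a = 1 := by
    intro a h
    by_contra ha
    obtain ⟨H, hH⟩ := basis (isOpen_compl_singleton (x := a)) (by simpa using (Ne.symm ha))
    exact hH (h H) rfl
  have eq_of : ∀ a b : G',
      (∀ N : OpenNormalSubgroup G',
        QuotientGroup.mk' N.toSubgroup a = QuotientGroup.mk' N.toSubgroup b) → a = b := by
    intro a b h
    have : a⁻¹ * b = 1 := sep _ fun N => QuotientGroup.eq.mp (h N)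
    exact (inv_mul_eq_one.mp this)
  -- the finite sets of conjugates
  let T : OpenNormalSubgroup G' → Type _ := fun N =>
    {p : G →* G' ⧸ N.toSubgroup //
      ∃ x : G' ⧸ N.toSubgroup, ∀ g : G, p g = x * φ N.toSubgroup (hO N) g * x⁻¹}
  haveI hTfin : ∀ N, Finite (T N) := by
    intro N
    have hsurj : Function.Surjective (fun x : G' ⧸ N.toSubgroup =>
        (⟨((MulAut.conj x).toMonoidHom.comp (φ N.toSubgroup (hO N))),
          x, fun g => rfl⟩ : T N)) := by
      rintro ⟨p, x, hx⟩
      exact ⟨x, Subtype.ext (MonoidHom.ext fun g => (hx g).symm)⟩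
    exact Finite.of_surjective _ hsurj
  haveI hTne : ∀ N, Nonempty (T N) :=
    fun N => ⟨⟨φ N.toSubgroup (hO N), 1, fun g => by simp⟩⟩
  have hmapid : ∀ (N : OpenNormalSubgroup G') (q : G' ⧸ N.toSubgroup),
      QuotientGroup.map N.toSubgroup N.toSubgroup (MonoidHom.id G') (fun x hx => hx) q = q := by
    intro N q
    obtain ⟨a, ha⟩ := QuotientGroup.mk'_surjective N.toSubgroup q
    rw [← ha]
    rfl
  have hmapcomp : ∀ (N M K : OpenNormalSubgroup G') (hNM : N ≤ M) (hMK : M ≤ K)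
      (q : G' ⧸ N.toSubgroup),
      QuotientGroup.map M.toSubgroup K.toSubgroup (MonoidHom.id G') (fun x hx => hMK hx)
        (QuotientGroup.map N.toSubgroup M.toSubgroup (MonoidHom.id G') (fun x hx => hNM hx) q) =
      QuotientGroup.map N.toSubgroup K.toSubgroup (MonoidHom.id G')
        (fun x hx => hMK (hNM hx)) q := by
    intro N M K hNM hMK q
    obtain ⟨a, ha⟩ := QuotientGroup.mk'_surjective N.toSubgroup q
    rw [← ha]; rfl
  -- the inverse system
  let F : OpenNormalSubgroup G' ⥤ Type _ :=
    { obj := T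
      map := fun {N M} f => TypeCat.ofHom fun p =>
        ⟨(QuotientGroup.map N.toSubgroup M.toSubgroup (MonoidHom.id G')
            (fun x hx => leOfHom f hx)).comp p.1, by
          obtain ⟨x, hx⟩ := p.2
          obtain ⟨y, hy⟩ := hcompat N.toSubgroup M.toSubgroup (hO N) (hO M) (leOfHom f)
          refine ⟨QuotientGroup.map N.toSubgroup M.toSubgroup (MonoidHom.id G')
            (fun x hx => leOfHom f hx) x * y, fun g => ?_⟩
          simp only [MonoidHom.comp_apply, hx g, map_mul, map_inv, hy g,
            mul_assoc, mul_inv_rev]⟩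
      map_id := fun N => ConcreteCategory.hom_ext _ _ fun p =>
        Subtype.ext (MonoidHom.ext fun g => hmapid N (p.1 g))
      map_comp := fun {N M K} f g => ConcreteCategory.hom_ext _ _ fun p =>
        Subtype.ext (MonoidHom.ext fun gg =>
          (hmapcomp N M K (leOfHom f) (leOfHom g) (p.1 gg)).symm) }
  obtain ⟨u, hu⟩ := nonempty_sections_of_finite_cofiltered_system F
  -- compatibility of the section along inclusions
  have hu' : ∀ {N M : OpenNormalSubgroup G'} (h : N ≤ M) (g : G),
      QuotientGroup.map N.toSubgroup M.toSubgroup (MonoidHom.id G')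
        (fun x hx => h hx) ((u N).1 g) = (u M).1 g := by
    intro N M h g
    have := hu (homOfLE h)
    exact congrArg (fun p : T M => p.1 g) this
  -- existence of the limit point
  have exists_lim : ∀ g : G, ∃ a : G',
      ∀ N : OpenNormalSubgroup G', QuotientGroup.mk' N.toSubgroup a = (u N).1 g := by
    intro g
    set Cs : OpenNormalSubgroup G' → Set G' :=
      fun N => QuotientGroup.mk' N.toSubgroup ⁻¹' {(u N).1 g} with hCs
    have hClosed : ∀ N, IsClosed (Cs N) := by
      intro N
      exact IsClosed.preimage (continuous_quotient_mk') (isClosed_discrete _)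
    have hNe : ∀ N, (Cs N).Nonempty := by
      intro N
      obtain ⟨a, ha⟩ := QuotientGroup.mk'_surjective N.toSubgroup ((u N).1 g)
      exact ⟨a, ha⟩
    have hMono : ∀ {N M : OpenNormalSubgroup G'}, N ≤ M → Cs N ⊆ Cs M := by
      intro N M h a ha
      have : QuotientGroup.mk' N.toSubgroup a = (u N).1 g := ha
      have := congrArg (QuotientGroup.map N.toSubgroup M.toSubgroup (MonoidHom.id G')
        (fun x hx => h hx)) this
      rw [hu' h g] at this
      exact this
    have hDir : Directed (· ⊇ ·) Cs := by
      intro N M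
      exact ⟨N ⊓ M, hMono inf_le_left, hMono inf_le_right⟩
    have := IsCompact.nonempty_iInter_of_directed_nonempty_isCompact_isClosed Cs hDir hNe
      (fun N => (hClosed N).isCompact) hClosed
    obtain ⟨a, ha⟩ := this
    exact ⟨a, fun N => Set.mem_iInter.mp ha N⟩
  choose ψfun hψ using exists_lim
  have ψmul : ∀ g h : G, ψfun (g * h) = ψfun g * ψfun h := by
    intro g h
    refine eq_of _ _ fun N => ?_
    rw [hψ (g * h) N, map_mul, map_mul, hψ g N, hψ h N]
  let ψ : G →* G' :=
    { toFun := ψfun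
      map_one' := by
        refine eq_of _ _ fun N => ?_
        rw [hψ 1 N, map_one, map_one]
      map_mul' := ψmul }
  -- continuity of each u N
  have hucont : ∀ N : OpenNormalSubgroup G', Continuous ((u N).1 : G → G' ⧸ N.toSubgroup) := by
    intro N
    obtain ⟨x, hx⟩ := (u N).2
    have : ((u N).1 : G → G' ⧸ N.toSubgroup) =
        fun g => x * φ N.toSubgroup (hO N) g * x⁻¹ := funext hx
    rw [this]
    exact (continuous_const.mul (hcont N.toSubgroup (hO N))).mul continuous_const
  have hψcont : Continuous ψ := by
    rw [continuous_def]
    intro U hU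
    rw [isOpen_iff_forall_mem_open]
    intro g hg
    have h1 : (1 : G') ∈ (fun y => ψ g * y) ⁻¹' U := by simpa using hg
    obtain ⟨H, hH⟩ := basis (hU.preimage (continuous_const.mul continuous_id)) h1
    refine ⟨(u H).1 ⁻¹' {(u H).1 g}, ?_, (hucont H).isOpen_preimage _ (isOpen_discrete _), rfl⟩
    intro h hh
    have hh' : QuotientGroup.mk' H.toSubgroup (ψ h) = QuotientGroup.mk' H.toSubgroup (ψ g) :=
      (hψ h H).trans (Eq.trans hh (hψ g H).symm)
    have hmem : (ψ g)⁻¹ * ψ h ∈ H.toSubgroup := QuotientGroup.eq.mp hh'.symm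
    have heq : ψ h = ψ g * ((ψ g)⁻¹ * ψ h) := by group
    show ψ h ∈ U
    rw [heq]
    exact hH hmem
  refine ⟨ψ, hψcont, ?_⟩
  intro N _ hN
  obtain ⟨x, hx⟩ := (u ⟨⟨N, hN⟩, ‹N.Normal›⟩).2
  exact ⟨x, fun g => (hψ g ⟨⟨N, hN⟩, ‹N.Normal›⟩).trans (hx g)⟩
end

section
/- Let f : G → H be a continuous homomorphism of profinite groups. Then f is surjective if and only if the following holds: for every finite set S equipped with a continuous action of H (equivalently, an action all of whose point stabilizers are open subgroups of H), S is connected as an H-set precisely when S, regarded as a G-set via f, is connected. -/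
open Pointwise


/-- A continuous homomorphism of profinite groups is surjective iff it detects
connectedness of finite continuous actions: for every finite set `S` with a continuous
`H`-action (i.e. all stabilizers are open), `S` is nonempty and transitive as an
`H`-set precisely when it is nonempty and transitive as a `G`-set via `f`. -/
theorem surjective_iff_connected_detection {G H : Type*}
    [Group G] [TopologicalSpace G] [IsTopologicalGroup G]
    [CompactSpace G] [T2Space G] [TotallyDisconnectedSpace G]
    [Group H] [TopologicalSpace H] [IsTopologicalGroup H]
    [CompactSpace H] [T2Space H] [TotallyDisconnectedSpace H]
    (f : G →* H) (hf : Continuous f) :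
    Function.Surjective f ↔
      ∀ (S : Type) [Finite S] [MulAction H S],
        (∀ s : S, IsOpen ((MulAction.stabilizer H s : Subgroup H) : Set H)) →
        ((Nonempty S ∧ MulAction.IsPretransitive H S) ↔
          (Nonempty S ∧ ∀ s t : S, ∃ g : G, f g • s = t)) := by
  constructor
  · intro hsurj S _ _ _
    constructor
    · rintro ⟨hne, htrans⟩
      refine ⟨hne, fun s t => ?_⟩
      obtain ⟨h, hh⟩ := htrans.exists_smul_eq s t
      obtain ⟨g, rfl⟩ := hsurj h
      exact ⟨g, hh⟩
    · rintro ⟨hne, htrans⟩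
      refine ⟨hne, ⟨fun s t => ?_⟩⟩
      obtain ⟨g, hg⟩ := htrans s t
      exact ⟨f g, hg⟩
  · intro hdet h
    by_contra hnot
    have hK : IsClosed ((f.range : Subgroup H) : Set H) := by
      have : ((f.range : Subgroup H) : Set H) = Set.range f := rfl
      rw [this, ← Set.image_univ]
      exact (CompactSpace.isCompact_univ.image hf).isClosed
    have hV : IsOpen {x : H | h * x ∉ f.range} := by
      have : {x : H | h * x ∉ f.range} = (fun x => h * x) ⁻¹' ((f.range : Set H))ᶜ := rfl
      rw [this]
      exact hK.isOpen_compl.preimage (continuous_mul_left h)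
    have h1V : (1 : H) ∈ {x : H | h * x ∉ f.range} := by
      simpa using hnot
    obtain ⟨W, hW, h1W, hWV⟩ := compact_exists_isClopen_in_isOpen hV h1V
    obtain ⟨N, hN⟩ := IsTopologicalGroup.exist_openNormalSubgroup_sub_clopen_nhds_of_one hW h1W
    set U : Subgroup H := f.range ⊔ N.toSubgroup with hU
    have hUopen : IsOpen (U : Set H) :=
      Subgroup.isOpen_mono le_sup_right N.isOpen
    have hhU : h ∉ U := by
      intro hmem
      rw [hU] at hmem
      have : h ∈ ((f.range : Set H) * (N.toSubgroup : Set H)) := by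
        rwa [← Subgroup.mul_normal]
      obtain ⟨k, hk, n, hn, hkn⟩ := this
      have : h * n⁻¹ ∉ f.range := hWV (hN (N.toSubgroup.inv_mem hn))
      apply this
      rw [← hkn, mul_assoc, mul_inv_cancel, mul_one]
      exact hk
    have hfin : Finite (H ⧸ U) := U.quotient_finite_of_isOpen hUopen
    have hstabQ : ∀ s : H ⧸ U, IsOpen ((MulAction.stabilizer H s : Subgroup H) : Set H) := by
      intro s
      obtain ⟨g, rfl⟩ := QuotientGroup.mk_surjective s
      have : ((MulAction.stabilizer H (QuotientGroup.mk g : H ⧸ U) : Subgroup H) : Set H) =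
          (fun x => g⁻¹ * x * g) ⁻¹' (U : Set H) := by
        ext x
        simp only [SetLike.mem_coe, MulAction.mem_stabilizer_iff, Set.mem_preimage]
        rw [MulAction.Quotient.smul_mk, QuotientGroup.eq]
        constructor
        · intro hx; simpa [mul_assoc] using U.inv_mem hx
        · intro hx; simpa [mul_assoc, mul_inv_rev] using U.inv_mem hx
      rw [this]
      exact hUopen.preimage (by continuity)
    -- transfer to a `Type 0` model
    obtain ⟨n, ⟨e⟩⟩ := Finite.exists_equiv_fin (H ⧸ U)
    letI : MulAction H (Fin n) := e.symm.mulAction H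
    have smul_def : ∀ (g : H) (x : Fin n), g • x = e (g • e.symm x) := by
      intro g x
      rw [Equiv.smul_def e.symm]
      simp
    have hstab : ∀ s : Fin n, IsOpen ((MulAction.stabilizer H s : Subgroup H) : Set H) := by
      intro s
      have : (MulAction.stabilizer H s : Subgroup H) =
          MulAction.stabilizer H (e.symm s) := by
        ext g
        simp only [MulAction.mem_stabilizer_iff, smul_def]
        constructor
        · intro hg; have := congrArg e.symm hg; simpa using this
        · intro hg; rw [hg]; simp
      rw [this]
      exact hstabQ _
    have htrans : MulAction.IsPretransitive H (Fin n) := by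
      refine ⟨fun s t => ?_⟩
      obtain ⟨g, hg⟩ := MulAction.exists_smul_eq H (e.symm s) (e.symm t)
      exact ⟨g, by rw [smul_def, hg]; simp⟩
    have := (hdet (Fin n) hstab).mp ⟨⟨e (QuotientGroup.mk 1)⟩, htrans⟩
    obtain ⟨g, hg⟩ := this.2 (e (QuotientGroup.mk 1)) (e (QuotientGroup.mk h))
    rw [smul_def] at hg
    simp only [Equiv.symm_apply_apply] at hg
    have hg' : (f g) • (QuotientGroup.mk 1 : H ⧸ U) = QuotientGroup.mk h := e.injective hg
    rw [MulAction.Quotient.smul_mk, QuotientGroup.eq] at hg'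
    apply hhU
    have hfg : f g ∈ U := Subgroup.mem_sup_left ⟨g, rfl⟩
    have := U.mul_mem hfg hg'
    simpa using this
end

section
/- Let p be a prime number, let R be a commutative ring in which p·1 = 0, and let G be a finite p-group. Then the augmentation ideal of the group algebra R[G] — the kernel of the R-algebra homomorphism R[G] → R sending every group element to 1 — is a nilpotent ideal. -/
open MonoidAlgebra

/-- Powers of an ideal are compatible with comap along a ring hom. -/
private lemma pow_le_comap_pow {A B : Type*} [Ring A] [Ring B] (f : A →+* B)
    (I : Ideal A) (J : Ideal B) (h : I ≤ J.comap f) : ∀ n : ℕ, I ^ n ≤ (J ^ n).comap f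
  | 0 => by
    rw [Submodule.pow_zero, Submodule.pow_zero, Ideal.one_eq_top, Ideal.one_eq_top,
      Ideal.comap_top]
  | n + 1 => by
    rw [Submodule.pow_succ, Submodule.pow_succ]
    refine Ideal.mul_le.2 fun r hr s hs => ?_
    exact Ideal.mem_comap.2 <| by
      rw [map_mul]
      exact Ideal.mul_mem_mul (pow_le_comap_pow f I J h n hr) (h hs)

/-- A central element generates a left ideal whose powers are generated by its powers. -/
private lemma span_singleton_pow_le {A : Type*} [Ring A] {c : A}
    (hc : ∀ x : A, Commute c x) : ∀ e : ℕ, (Ideal.span {c}) ^ e ≤ Ideal.span {c ^ e}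
  | 0 => by
    rw [Submodule.pow_zero, pow_zero, Ideal.span_singleton_one, Ideal.one_eq_top]
  | e + 1 => by
    rw [Submodule.pow_succ]
    refine Ideal.mul_le.2 fun r hr s hs => ?_
    obtain ⟨a, ha⟩ := Ideal.mem_span_singleton'.1 (span_singleton_pow_le hc e hr)
    obtain ⟨b, hb⟩ := Ideal.mem_span_singleton'.1 hs
    refine Ideal.mem_span_singleton'.2 ⟨a * b, ?_⟩
    have hce : c ^ e * b = b * c ^ e := ((hc b).pow_left e).eq
    rw [← ha, ← hb]
    calc a * b * c ^ (e + 1)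
        = a * (b * c ^ e) * c := by rw [pow_succ]; noncomm_ring
      _ = a * (c ^ e * b) * c := by rw [hce]
      _ = a * c ^ e * (b * c) := by noncomm_ring

private lemma ideal_pow_add {A : Type*} [Ring A] (I : Ideal A) (x : ℕ) :
    ∀ y : ℕ, I ^ (x + (y + 1)) = I ^ x * I ^ (y + 1)
  | 0 => by rw [Submodule.pow_one, Submodule.pow_succ]
  | y + 1 => by
    rw [show x + (y + 1 + 1) = (x + (y + 1)) + 1 by omega, Submodule.pow_succ,
      ideal_pow_add I x y, Ideal.mul_assoc, ← Submodule.pow_succ]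

private lemma ideal_pow_mul_le {A : Type*} [Ring A] {I J : Ideal A} {m : ℕ}
    (h : I ^ (m + 1) ≤ J) : ∀ e : ℕ, I ^ ((m + 1) * e) ≤ J ^ e
  | 0 => by rw [Nat.mul_zero, Submodule.pow_zero, Submodule.pow_zero]
  | e + 1 => by
    rw [show (m + 1) * (e + 1) = (m + 1) * e + (m + 1) by ring, ideal_pow_add,
      Submodule.pow_succ (M := J)]
    exact Ideal.mul_mono (ideal_pow_mul_le h e) h

private lemma aux_main {R : Type*} [CommRing R] (p : ℕ) (hp : p.Prime) (hpR : (p : R) = 0) :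
    ∀ (k : ℕ) (G : Type*) [Group G] [Finite G], Nat.card G ≤ k → IsPGroup p G →
    ∃ n : ℕ, 0 < n ∧ (RingHom.ker ((MonoidAlgebra.lift R R G) 1)) ^ n = ⊥ := by
  intro k
  induction k with
  | zero =>
    intro G _ _ hcard _
    exact absurd hcard (by have := Nat.card_pos (α := G); omega)
  | succ k ih =>
    intro G _ _ hcard hG
    haveI : Fact p.Prime := ⟨hp⟩
    rcases subsingleton_or_nontrivial G with hGs | hGn
    · -- trivial group : the augmentation map is injective
      refine ⟨1, one_pos, ?_⟩
      rw [Submodule.pow_one, eq_bot_iff]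
      intro x hx
      have hx1 : x = MonoidAlgebra.single (1 : G) (x.coeff 1) := by
        ext a
        rw [Subsingleton.elim a (1 : G)]
        simp
      have : (MonoidAlgebra.lift R R G) 1 x = x.coeff 1 := by
        rw [hx1]; simp
      have hx0 : x.coeff 1 = 0 := by
        rw [← this]; exact RingHom.mem_ker.1 hx
      rw [Submodule.mem_bot, hx1, hx0, MonoidAlgebra.single_zero]
    · -- nontrivial group : quotient by a central subgroup
      haveI := IsPGroup.center_nontrivial hG
      obtain ⟨⟨z, hzc⟩, hzne⟩ := exists_ne (1 : Subgroup.center G)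
      have hz1 : z ≠ 1 := fun h => hzne (Subtype.ext h)
      set N := Subgroup.zpowers z with hN
      have hNle : N ≤ Subgroup.center G := Subgroup.zpowers_le.2 hzc
      haveI hNn : N.Normal := by
        constructor
        intro n hn g
        have hcomm := (Subgroup.mem_center_iff.1 (hNle hn)) g
        have : g * n * g⁻¹ = n := by rw [hcomm, mul_inv_cancel_right]
        rw [this]; exact hn
      set Q := G ⧸ N with hQ
      -- the quotient is a smaller p-group
      have hcardQ : Nat.card Q ≤ k := by
        have h1 : Nat.card G = Nat.card Q * Nat.card N :=
          Subgroup.card_eq_card_quotient_mul_card_subgroup N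
        have h2 : 1 < Nat.card N := by
          rw [Finite.one_lt_card_iff_nontrivial]
          exact ⟨⟨⟨z, Subgroup.mem_zpowers z⟩, 1, fun h => hz1 (by simpa using congrArg Subtype.val h)⟩⟩
        have h3 : 0 < Nat.card Q := Nat.card_pos
        have h4 : Nat.card Q * 2 ≤ Nat.card Q * Nat.card N := Nat.mul_le_mul_left _ h2
        omega
      obtain ⟨m, hm0, hmI⟩ := ih Q hcardQ (hG.to_quotient N)
      -- the induced map of monoid algebras
      set π : MonoidAlgebra R G →+* MonoidAlgebra R Q :=
        MonoidAlgebra.mapDomainRingHom R (QuotientGroup.mk' N) with hπ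
      have hπ_apply : ∀ x : MonoidAlgebra R G,
          π x = MonoidAlgebra.mapDomain (QuotientGroup.mk (s := N)) x := fun x => rfl
      -- compatibility with augmentations
      have hcompat : ∀ x : MonoidAlgebra R G,
          (MonoidAlgebra.lift R R Q) 1 (π x) = (MonoidAlgebra.lift R R G) 1 x := by
        have : (((MonoidAlgebra.lift R R Q) 1 : MonoidAlgebra R Q →ₐ[R] R) :
            MonoidAlgebra R Q →+* R).comp π
            = (((MonoidAlgebra.lift R R G) 1 : MonoidAlgebra R G →ₐ[R] R) :
            MonoidAlgebra R G →+* R) := by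
          apply MonoidAlgebra.ringHom_ext <;> intro b <;>
            simp [hπ_apply, MonoidAlgebra.mapDomain_single]
        intro x
        exact congrArg (· x) this
      -- the augmentation ideal of G maps into that of Q
      have hker_le : RingHom.ker ((MonoidAlgebra.lift R R G) 1)
          ≤ (RingHom.ker ((MonoidAlgebra.lift R R Q) 1)).comap π := by
        intro x hx
        rw [Ideal.mem_comap, RingHom.mem_ker, hcompat]
        exact RingHom.mem_ker.1 hx
      have hpow_le : (RingHom.ker ((MonoidAlgebra.lift R R G) 1)) ^ m ≤ RingHom.ker π := by
        refine le_trans (pow_le_comap_pow π _ _ hker_le m) ?_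
        rw [hmI]
        intro x hx
        exact RingHom.mem_ker.2 (Ideal.mem_comap.1 hx)
      -- the central element c = z - 1
      set c : MonoidAlgebra R G := MonoidAlgebra.of R G z - 1 with hc
      have hofz_comm : ∀ x : MonoidAlgebra R G,
          MonoidAlgebra.of R G z * x = x * MonoidAlgebra.of R G z := by
        intro x
        induction x using MonoidAlgebra.induction_linear with
        | zero => simp
        | add f g hf hg => rw [mul_add, add_mul, hf, hg]
        | single g r =>
          have : z * g = g * z := (Subgroup.mem_center_iff.1 hzc g).symm
          simp only [MonoidAlgebra.of_apply, MonoidAlgebra.single_mul_single, one_mul, mul_one, this]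
      have hc_comm : ∀ x : MonoidAlgebra R G, Commute c x := by
        intro x
        show c * x = x * c
        rw [hc, sub_mul, mul_sub, hofz_comm x, one_mul, mul_one]
      -- powers of z, shifted by one, lie in the span of c
      have hA : ∀ b : ℕ, (MonoidAlgebra.of R G (z ^ b) : MonoidAlgebra R G) - 1
          ∈ Ideal.span {c} := by
        intro b
        induction b with
        | zero =>
          rw [pow_zero, map_one, sub_self]
          exact (Ideal.span {c}).zero_mem
        | succ b hb =>
          have : (MonoidAlgebra.of R G (z ^ (b+1)) : MonoidAlgebra R G) - 1
              = MonoidAlgebra.of R G (z ^ b) * c + (MonoidAlgebra.of R G (z ^ b) - 1) := by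
            rw [hc, pow_succ, map_mul]; noncomm_ring
          rw [this]
          exact Ideal.add_mem _ (Ideal.mul_mem_left _ _ (Ideal.subset_span rfl)) hb
      -- group elements minus their coset representatives lie in the span of c
      have hB : ∀ g : G, (MonoidAlgebra.of R G g : MonoidAlgebra R G)
          - MonoidAlgebra.of R G (Quotient.out (QuotientGroup.mk (s := N) g))
          ∈ Ideal.span {c} := by
        intro g
        set s := Quotient.out (QuotientGroup.mk (s := N) g) with hs
        have hmem : s⁻¹ * g ∈ N := by
          rw [← QuotientGroup.eq]
          exact Quotient.out_eq _
        obtain ⟨a, ha⟩ := Subgroup.mem_zpowers_iff.1 hmem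
        -- replace the integer power by a natural power
        have hzo : 0 < orderOf z := by
          have : IsOfFinOrder z := isOfFinOrder_of_finite z
          exact this.orderOf_pos
        obtain ⟨b, hb⟩ : ∃ b : ℕ, z ^ b = s⁻¹ * g := by
          refine ⟨(a % (orderOf z : ℤ)).toNat, ?_⟩
          have hnn : 0 ≤ a % (orderOf z : ℤ) :=
            Int.emod_nonneg a (by exact_mod_cast hzo.ne')
          rw [← zpow_natCast, Int.toNat_of_nonneg hnn, zpow_mod_orderOf, ha]
        have hg : g = s * z ^ b := by rw [hb, mul_inv_cancel_left]
        have : (MonoidAlgebra.of R G g : MonoidAlgebra R G) - MonoidAlgebra.of R G s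
            = MonoidAlgebra.of R G s * (MonoidAlgebra.of R G (z ^ b) - 1) := by
          rw [mul_sub, ← map_mul, mul_one, ← hg]
        rw [this]
        exact Ideal.mul_mem_left _ _ (hA b)
      -- the kernel of π is contained in the span of c
      have hker_span : RingHom.ker π ≤ Ideal.span {c} := by
        intro x hx
        let T : MonoidAlgebra R G →+ MonoidAlgebra R G :=
          { toFun := MonoidAlgebra.mapDomain
              (fun g : G => Quotient.out (QuotientGroup.mk (s := N) g))
            map_zero' := MonoidAlgebra.mapDomain_zero _
            map_add' := MonoidAlgebra.mapDomain_add _ }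
        have hTsingle : ∀ (g : G) (r : R),
            T (MonoidAlgebra.single g r)
              = MonoidAlgebra.single (Quotient.out (QuotientGroup.mk (s := N) g)) r :=
          fun g r => MonoidAlgebra.mapDomain_single
        have hsub : ∀ y : MonoidAlgebra R G, y - T y ∈ Ideal.span {c} := by
          intro y
          induction y using MonoidAlgebra.induction_linear with
          | zero => rw [map_zero, sub_zero]; exact (Ideal.span {c}).zero_mem
          | add f g hf hg =>
            rw [map_add]
            have h3 := Ideal.add_mem _ hf hg
            convert h3 using 1
            rw [sub_add_sub_comm]
          | single g r =>
            rw [hTsingle]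
            have h2 : MonoidAlgebra.single (R := R) g r
                - MonoidAlgebra.single (Quotient.out (QuotientGroup.mk (s := N) g)) r
                = MonoidAlgebra.single (1 : G) r
                  * ((MonoidAlgebra.of R G g : MonoidAlgebra R G)
                  - MonoidAlgebra.of R G (Quotient.out (QuotientGroup.mk (s := N) g))) := by
              simp only [mul_sub, MonoidAlgebra.of_apply, MonoidAlgebra.single_mul_single,
                one_mul, mul_one]
            rw [h2]
            exact Ideal.mul_mem_left _ _ (hB g)
        have hTx : T x = 0 := by
          have hcomp : T x = MonoidAlgebra.mapDomain (Quotient.out (s := QuotientGroup.leftRel N))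
              (MonoidAlgebra.mapDomain (QuotientGroup.mk (s := N)) x) := by
            show MonoidAlgebra.mapDomain _ x = _
            simp only [MonoidAlgebra.mapDomain, MonoidAlgebra.coeff_ofCoeff, ← Finsupp.mapDomain_comp]
            rfl
          rw [hcomp, ← hπ_apply, RingHom.mem_ker.1 hx, MonoidAlgebra.mapDomain_zero]
        have := hsub x
        rwa [hTx, sub_zero] at this
      -- c is nilpotent
      obtain ⟨t, ht⟩ := hG z
      have hcpow : c ^ (p ^ t) = 0 := by
        rcases subsingleton_or_nontrivial R with hR | hR
        · haveI : Subsingleton (MonoidAlgebra R G) :=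
            inferInstance
          exact Subsingleton.elim _ _
        · haveI : CharP R p := by
            have hdvd : ringChar R ∣ p := ringChar.dvd hpR
            rcases (Nat.Prime.eq_one_or_self_of_dvd hp _ hdvd) with h1 | h1
            · exfalso
              have := ringChar.of_eq (R := R) rfl
              have h10 : (1 : R) = 0 := by
                have := CharP.cast_eq_zero R (ringChar R)
                rwa [h1, Nat.cast_one] at this
              exact one_ne_zero h10
            · rw [← h1]; exact ringChar.charP R
          haveI : Fact p.Prime := ⟨hp⟩
          haveI : CharP (MonoidAlgebra R G) p := by
            refine charP_of_injective_ringHom (f := algebraMap R (MonoidAlgebra R G)) ?_ p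
            intro a b hab
            have : MonoidAlgebra.single (1 : G) a = MonoidAlgebra.single (1 : G) b := hab
            simpa using congrArg (·.coeff (1 : G)) this
          rw [hc, sub_pow_char_pow_of_commute p t (Commute.one_right _),
            one_pow, ← map_pow, ht, map_one, sub_self]
      have hspan_pow : (Ideal.span {c}) ^ (p ^ t) = ⊥ := by
        rw [eq_bot_iff]
        refine le_trans (span_singleton_pow_le hc_comm (p ^ t)) ?_
        rw [hcpow]
        simp
      -- put everything together
      obtain ⟨m', rfl⟩ : ∃ m', m = m' + 1 := ⟨m - 1, by omega⟩
      refine ⟨(m' + 1) * p ^ t, Nat.mul_pos m'.succ_pos (pow_pos hp.pos t), ?_⟩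
      rw [eq_bot_iff]
      calc (RingHom.ker ((MonoidAlgebra.lift R R G) 1)) ^ ((m' + 1) * p ^ t)
          ≤ (Ideal.span {c}) ^ (p ^ t) :=
            ideal_pow_mul_le (le_trans hpow_le hker_span) (p ^ t)
        _ = ⊥ := hspan_pow

/-- If `p` is a prime with `p = 0` in the commutative ring `R` and `G` is a finite
`p`-group, then the augmentation ideal of the group algebra `R[G]` is nilpotent. -/
theorem augmentationIdeal_nilpotent {R : Type*} [CommRing R] (p : ℕ) (hp : p.Prime)
    (hpR : (p : R) = 0) {G : Type*} [Group G] [Finite G] (hG : IsPGroup p G) :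
    ∃ n : ℕ, 0 < n ∧
      (RingHom.ker ((MonoidAlgebra.lift R R G) 1)) ^ n = ⊥ := by
  exact aux_main p hp hpR (Nat.card G) G le_rfl hG
end

section
/- Let k be a field and G a finite group. The regular representation of G over k — the k-vector space of functions G → k, with G acting by translation — is unipotent if and only if every prime number dividing the order of G is zero in k; equivalently, if and only if G is a p-group for p the characteristic of k (where in characteristic 0 this means G is trivial). -/
open Module

section Aux

variable {k G V : Type*} [Field k] [Group G] [AddCommGroup V] [Module k V]

/-- The submodule of vectors `v` such that `ρ g v - v ∈ W` for all `g`. -/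
def nextW (ρ : Representation k G V) (W : Submodule k V) : Submodule k V where
  carrier := {v | ∀ g : G, ρ g v - v ∈ W}
  add_mem' := by
    intro a b ha hb g
    have h : ρ g (a + b) - (a + b) = (ρ g a - a) + (ρ g b - b) := by
      rw [map_add]; abel
    rw [h]; exact W.add_mem (ha g) (hb g)
  zero_mem' := by intro g; simp
  smul_mem' := by
    intro c v hv g
    have h : ρ g (c • v) - c • v = c • (ρ g v - v) := by
      rw [map_smul, smul_sub]
    rw [h]; exact W.smul_mem _ (hv g)

lemma mem_nextW {ρ : Representation k G V} {W : Submodule k V} {v : V} :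
    v ∈ nextW ρ W ↔ ∀ g : G, ρ g v - v ∈ W := Iff.rfl

lemma nextW_stable (ρ : Representation k G V) (W : Submodule k V) :
    ∀ g : G, ∀ v ∈ nextW ρ W, ρ g v ∈ nextW ρ W := by
  intro g v hv g'
  have h1 : ρ g' (ρ g v) = ρ (g' * g) v := by rw [map_mul]; rfl
  have h2 : ρ g' (ρ g v) - ρ g v = (ρ (g' * g) v - v) - (ρ g v - v) := by
    rw [h1]; abel
  rw [h2]
  exact W.sub_mem (hv _) (hv g)

/-- The quotient representation on `V ⧸ W` for a `G`-stable submodule `W`. -/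
def quotRep (ρ : Representation k G V) (W : Submodule k V)
    (hW : ∀ g : G, ∀ v ∈ W, ρ g v ∈ W) : Representation k G (V ⧸ W) where
  toFun g := Submodule.mapQ W W (ρ g) (fun v hv => hW g v hv)
  map_one' := by
    refine Submodule.linearMap_qext _ ?_
    ext v
    simp [Submodule.mapQ_apply]
  map_mul' := by
    intro g g'
    refine Submodule.linearMap_qext _ ?_
    ext v
    simp [Submodule.mapQ_apply, map_mul]

/-- A nonzero representation of a finite `p`-group in characteristic `p` has a nonzero
invariant vector. -/
lemma exists_fixed_of_pGroup [Fintype G] {p : ℕ} [Fact p.Prime] [CharP k p]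
    (hG : IsPGroup p G) (ρ : Representation k G V) {v : V} (hv : v ≠ 0) :
    ∃ w : V, w ≠ 0 ∧ ∀ g : G, ρ g w = w := by
  letI : Module (ZMod p) V := Module.compHom V (ZMod.castHom dvd_rfl k)
  have zsmul_def : ∀ (z : ZMod p) (x : V), z • x = (ZMod.castHom dvd_rfl k z) • x :=
    fun _ _ => rfl
  set S : Submodule (ZMod p) V := Submodule.span (ZMod p) (Set.range fun g : G => ρ g v)
    with hSdef
  have hstab : ∀ g : G, ∀ x ∈ S, ρ g x ∈ S := by
    intro g x hx
    induction hx using Submodule.span_induction with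
    | mem x hx =>
      obtain ⟨g', rfl⟩ := hx
      refine Submodule.subset_span ⟨g * g', ?_⟩
      show ρ (g * g') v = ρ g (ρ g' v)
      rw [map_mul]; rfl
    | zero => rw [map_zero]; exact S.zero_mem
    | add a b _ _ ha hb => rw [map_add]; exact S.add_mem ha hb
    | smul z x _ hx =>
      rw [zsmul_def, map_smul, ← zsmul_def]
      exact S.smul_mem z hx
  haveI : FiniteDimensional (ZMod p) S :=
    FiniteDimensional.span_of_finite _ (Set.finite_range _)
  haveI : Finite S := Module.finite_of_finite (ZMod p)
  letI : MulAction G S :=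
    { smul := fun g x => ⟨ρ g x, hstab g x x.2⟩
      one_smul := fun x => Subtype.ext (by
        show ρ 1 (x : V) = x
        rw [map_one]; rfl)
      mul_smul := fun g g' x => Subtype.ext (by
        show ρ (g * g') (x : V) = ρ g (ρ g' (x : V))
        rw [map_mul]; rfl) }
  have hvS : v ∈ S := Submodule.subset_span ⟨1, by
    show ρ 1 v = v
    rw [map_one]; rfl⟩
  -- `p` divides the cardinality of `S`
  have hx0 : (⟨v, hvS⟩ : S) ≠ 0 := by
    intro h
    exact hv (congrArg Subtype.val h)
  have hps : (p : ℕ) • (⟨v, hvS⟩ : S) = 0 := by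
    have h1 : (p : ℕ) • v = (0 : V) := by
      have h2 := Nat.cast_smul_eq_nsmul k p v
      rw [CharP.cast_eq_zero k p, zero_smul] at h2
      exact h2.symm
    exact Subtype.ext (by simpa using h1)
  have horder : addOrderOf (⟨v, hvS⟩ : S) = p :=
    addOrderOf_eq_prime hps hx0
  have hdvdS : p ∣ Nat.card S := by
    have hdd := addOrderOf_dvd_natCard (⟨v, hvS⟩ : S)
    rwa [horder] at hdd
  have hmod := hG.card_modEq_card_fixedPoints S
  have hdvdF : p ∣ Nat.card (MulAction.fixedPoints G S) :=
    Nat.modEq_zero_iff_dvd.mp (hmod.symm.trans (Nat.modEq_zero_iff_dvd.mpr hdvdS))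
  have h0fix : (0 : S) ∈ MulAction.fixedPoints G S := by
    intro g
    refine Subtype.ext ?_
    show ρ g ((0 : S) : V) = ((0 : S) : V)
    rw [Submodule.coe_zero, map_zero]
  have hposF : 0 < Nat.card (MulAction.fixedPoints G S) :=
    Nat.card_pos_iff.mpr ⟨⟨⟨0, h0fix⟩⟩, Set.Finite.to_subtype (Set.toFinite _)⟩
  have h1F : 1 < Nat.card (MulAction.fixedPoints G S) :=
    lt_of_lt_of_le (Fact.out : p.Prime).one_lt (Nat.le_of_dvd hposF hdvdF)
  have hex : ∃ x : S, x ∈ MulAction.fixedPoints G S ∧ x ≠ 0 := by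
    by_contra hxcon
    push_neg at hxcon
    haveI : Subsingleton (MulAction.fixedPoints G S) := by
      refine ⟨fun a b => Subtype.ext ?_⟩
      have ha := hxcon a a.2
      have hb := hxcon b b.2
      rw [ha, hb]
    refine absurd h1F ?_
    rw [Nat.card_of_subsingleton (⟨0, h0fix⟩ : MulAction.fixedPoints G S)]
    exact lt_irrefl 1
  obtain ⟨x, hxfix, hxne⟩ := hex
  refine ⟨(x : V), ?_, ?_⟩
  · intro h
    exact hxne (Subtype.ext h)
  · intro g
    have := hxfix g
    exact congrArg Subtype.val this

/-- The canonical invariant filtration. -/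
def chainW (ρ : Representation k G V) : ℕ → Submodule k V
  | 0 => ⊥
  | n + 1 => nextW ρ (chainW ρ n)

end Aux

/-- A representation is unipotent if it admits a finite chain of subrepresentations
`0 = W₀ ⊆ W₁ ⊆ ⋯ ⊆ W_m = V` on whose successive quotients the group acts trivially. -/
def Representation.IsUnipotent {k G V : Type*} [Field k] [Group G] [AddCommGroup V]
    [Module k V] (ρ : Representation k G V) : Prop :=
  ∃ (m : ℕ) (W : Fin (m + 1) → Submodule k V),
    W 0 = ⊥ ∧ W (Fin.last m) = ⊤ ∧ Monotone W ∧
    ∀ (g : G) (i : Fin m), ∀ v ∈ W i.succ, ρ g v - v ∈ W i.castSucc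

/-- The regular representation of a group `G` over a field `k`: the space of functions
`G → k` with `(g · f) h = f (g⁻¹ h)`. -/
def regularRepresentation (k G : Type*) [Field k] [Group G] :
    Representation k G (G → k) where
  toFun g :=
    { toFun := fun f h => f (g⁻¹ * h)
      map_add' := fun _ _ => rfl
      map_smul' := fun _ _ => rfl }
  map_one' := by
    ext f h
    simp
  map_mul' := by
    intro g g'
    ext f h
    simp [mul_assoc]

/-- The regular representation of a finite group `G` over a field `k` is unipotent if
and only if every prime dividing the order of `G` is zero in `k`. -/
theorem regularRepresentation_isUnipotent_iff (k : Type*) [Field k]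
    (G : Type*) [Group G] [Fintype G] :
    (regularRepresentation k G).IsUnipotent ↔
      ∀ p : ℕ, p.Prime → p ∣ Fintype.card G → (p : k) = 0 := by
  set ρ := regularRepresentation k G with hρdef
  constructor
  · rintro ⟨m, W, hW0, hWlast, hmono, hcond⟩ p hp hpdvd
    classical
    by_contra hpk
    haveI : Fact p.Prime := ⟨hp⟩
    obtain ⟨g, hg⟩ := exists_prime_orderOf_dvd_card p hpdvd
    set A : Module.End k (G → k) := ρ g with hAdef
    set u : Module.End k (G → k) := A - 1 with hudef
    have hA1 : A = u + 1 := by rw [hudef]; abel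
    -- u is nilpotent
    have key : ∀ j : ℕ, ∀ i : Fin (m + 1), (i : ℕ) ≤ j → ∀ v ∈ W i, (u ^ j) v = 0 := by
      intro j
      induction j with
      | zero =>
        intro i hi v hv
        have h0 : i = 0 := Fin.ext (Nat.le_zero.mp hi)
        rw [h0, hW0, Submodule.mem_bot] at hv
        rw [pow_zero, hv]
        rfl
      | succ j ih =>
        intro i hi v hv
        rcases Fin.eq_zero_or_eq_succ i with h0 | ⟨i', rfl⟩
        · rw [h0, hW0, Submodule.mem_bot] at hv
          rw [hv, map_zero]
        · have h1 : u v ∈ W i'.castSucc := by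
            have hc := hcond g i' v hv
            have : u v = ρ g v - v := by
              simp [hudef, hAdef, LinearMap.sub_apply]
            rwa [this]
          have h2 : ((i'.castSucc : Fin (m + 1)) : ℕ) ≤ j := by
            have hs : ((i'.succ : Fin (m + 1)) : ℕ) = (i' : ℕ) + 1 := Fin.val_succ i'
            have hcs : ((i'.castSucc : Fin (m + 1)) : ℕ) = (i' : ℕ) := Fin.coe_castSucc i'
            omega
          have := ih i'.castSucc h2 (u v) h1
          rw [pow_succ, Module.End.mul_apply]
          exact this
    have hu_pow : u ^ m = 0 := by
      refine LinearMap.ext fun v => ?_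
      have hvtop : v ∈ W (Fin.last m) := hWlast ▸ Submodule.mem_top
      exact key m (Fin.last m) (by simp) v hvtop
    have hu_nil : IsNilpotent u := ⟨m, hu_pow⟩
    -- A ^ p = 1
    have hAp : A ^ p = 1 := by
      rw [hAdef, ← map_pow, ← hg, pow_orderOf_eq_one, map_one]
    -- binomial expansion
    have hbinom := (Commute.one_right u).add_pow p
    rw [← hA1, hAp] at hbinom
    rw [Finset.sum_range_succ'] at hbinom
    simp only [pow_zero, one_pow, one_mul, mul_one, Nat.choose_zero_right, Nat.cast_one] at hbinom
    -- hbinom : 1 = (∑ i in range p, u ^ (i+1) * 1 ^ (p - (i+1)) * C(p, i+1)) + 1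
    have hsum : (∑ i ∈ Finset.range p,
        u ^ (i + 1) * (p.choose (i + 1) : Module.End k (G → k))) = 0 := by
      have h' : (∑ i ∈ Finset.range p,
          u ^ (i + 1) * (p.choose (i + 1) : Module.End k (G → k))) + 1 = 0 + 1 := by
        rw [zero_add]; exact hbinom.symm
      exact add_right_cancel h'
    set B : Module.End k (G → k) :=
      ∑ i ∈ Finset.range p, u ^ i * (p.choose (i + 1) : Module.End k (G → k)) with hBdef
    have huB : u * B = 0 := by
      rw [← hsum, hBdef, Finset.mul_sum]
      refine Finset.sum_congr rfl fun i _ => ?_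
      rw [pow_succ', mul_assoc]
    obtain ⟨q, hq⟩ : ∃ q, p = q + 1 := ⟨p - 1, (Nat.succ_pred_eq_of_pos hp.pos).symm⟩
    set s : Module.End k (G → k) :=
      ∑ i ∈ Finset.range q, u ^ i * (p.choose (i + 2) : Module.End k (G → k)) with hsdef
    have hB : B = u * s + (p : Module.End k (G → k)) := by
      rw [hBdef, hq, Finset.sum_range_succ']
      congr 1
      · rw [hsdef, Finset.mul_sum]
        refine Finset.sum_congr rfl fun i _ => ?_
        rw [hq, pow_succ', mul_assoc]
      · rw [pow_zero, one_mul, Nat.choose_one_right, ← hq]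
    have hcomm_us : Commute u s := by
      rw [hsdef]
      refine Commute.sum_right _ _ _ fun i _ => ?_
      exact ((Commute.refl u).pow_right i).mul_right (Nat.cast_commute _ _).symm
    have hnil_us : IsNilpotent (u * s) := hcomm_us.isNilpotent_mul_right hu_nil
    have hunit_p : IsUnit ((p : ℕ) : Module.End k (G → k)) := by
      have hmap : ((p : ℕ) : Module.End k (G → k)) =
          algebraMap k (Module.End k (G → k)) ((p : ℕ) : k) :=
        (map_natCast (algebraMap k (Module.End k (G → k))) p).symm
      rw [hmap]
      exact (isUnit_iff_ne_zero.mpr hpk).map _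
    have hunit_B : IsUnit B := by
      rw [hB]
      exact hnil_us.isUnit_add_right_of_commute hunit_p (Nat.cast_commute _ _).symm
    have hu0 : u = 0 := by
      obtain ⟨c, hc⟩ := hunit_B.exists_right_inv
      calc u = u * (B * c) := by rw [hc, mul_one]
        _ = (u * B) * c := by rw [mul_assoc]
        _ = 0 := by rw [huB, zero_mul]
    have hAone : A = 1 := by rw [hA1, hu0, zero_add]
    -- contradiction by evaluating on the indicator function of 1
    have hgne : g ≠ 1 := by
      intro h
      rw [h, orderOf_one] at hg
      exact hp.one_lt.ne' hg.symm
    have happ : A (Pi.single (1 : G) (1 : k)) = Pi.single (1 : G) (1 : k) := by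
      rw [hAone]; rfl
    have heval := congrFun happ g
    have hL : A (Pi.single (1 : G) (1 : k)) g
        = (Pi.single (1 : G) (1 : k) : G → k) (g⁻¹ * g) := by
      rw [hAdef, hρdef]
      rfl
    rw [hL, inv_mul_cancel, Pi.single_eq_same, Pi.single_eq_of_ne hgne] at heval
    exact one_ne_zero heval
  · intro h
    by_cases hcard : Fintype.card G = 1
    · haveI : Subsingleton G := Fintype.card_le_one_iff_subsingleton.mp hcard.le
      refine ⟨1, ![⊥, ⊤], rfl, rfl, ?_, ?_⟩
      · intro i j hij
        fin_cases i <;> fin_cases j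
        · exact le_rfl
        · exact bot_le
        · exact absurd hij (by decide)
        · exact le_rfl
      · intro g i v hv
        have hg : g = 1 := Subsingleton.elim g 1
        subst hg
        have hρ1 : ρ 1 v = v := by rw [map_one]; rfl
        rw [hρ1, sub_self]
        exact Submodule.zero_mem _
    · obtain ⟨p, hp, hpdvd⟩ := Nat.exists_prime_and_dvd hcard
      haveI hfp : Fact p.Prime := ⟨hp⟩
      have hpk : (p : k) = 0 := h p hp hpdvd
      haveI hchar : CharP k p := (CharP.charP_iff_prime_eq_zero hp).mpr hpk
      have hprimes : ∀ {q : ℕ}, q.Prime → q ∣ Fintype.card G → q = p := by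
        intro q hq hqdvd
        haveI : CharP k q := (CharP.charP_iff_prime_eq_zero hq).mpr (h q hq hqdvd)
        exact CharP.eq k this hchar
      have hGp : IsPGroup p G := IsPGroup.of_card (by
        rw [Nat.card_eq_fintype_card]
        exact Nat.eq_prime_pow_of_unique_prime_dvd Fintype.card_ne_zero hprimes)
      -- build the chain
      set W : ℕ → Submodule k (G → k) := chainW ρ with hWdef
      have hW0 : W 0 = ⊥ := rfl
      have hWsucc : ∀ n, W (n + 1) = nextW ρ (W n) := fun n => rfl
      have hstable : ∀ n, ∀ g : G, ∀ v ∈ W n, ρ g v ∈ W n := by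
        intro n
        cases n with
        | zero =>
          intro g v hv
          rw [hW0, Submodule.mem_bot] at hv ⊢
          rw [hv, map_zero]
        | succ n => exact nextW_stable ρ (W n)
      have hmono : ∀ n, W n ≤ W (n + 1) := by
        intro n
        induction n with
        | zero => exact bot_le
        | succ n ih =>
          intro v hv g
          exact ih (hv g)
      have hgrow : ∀ n, W n ≠ ⊤ → W n < W (n + 1) := by
        intro n hn
        obtain ⟨v, hv⟩ : ∃ v, v ∉ W n := by
          by_contra hcon
          push_neg at hcon
          exact hn (eq_top_iff.mpr fun v _ => hcon v)
        set ρ' := quotRep ρ (W n) (hstable n) with hρ'def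
        have hv' : ((W n).mkQ v) ≠ 0 := by
          rwa [ne_eq, Submodule.mkQ_apply, Submodule.Quotient.mk_eq_zero]
        obtain ⟨w, hw0, hwfix⟩ := exists_fixed_of_pGroup hGp ρ' hv'
        obtain ⟨z, hz⟩ := Submodule.mkQ_surjective (W n) w
        rw [SetLike.lt_iff_le_and_exists]
        refine ⟨hmono n, z, ?_, ?_⟩
        · rw [hWsucc]
          intro g0
          have hfix := hwfix g0
          rw [← hz] at hfix
          have hmapq : ρ' g0 ((W n).mkQ z) = (W n).mkQ (ρ g0 z) := rfl
          rw [hmapq] at hfix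
          rwa [Submodule.mkQ_apply, Submodule.mkQ_apply, Submodule.Quotient.eq] at hfix
        · intro hmem
          apply hw0
          rw [← hz, Submodule.mkQ_apply, Submodule.Quotient.mk_eq_zero]
          exact hmem
      haveI hfd : FiniteDimensional k (G → k) := inferInstance
      have hkey : ∀ n, n ≤ finrank k ↥(W n) ∨ W n = ⊤ := by
        intro n
        induction n with
        | zero => exact Or.inl (Nat.zero_le _)
        | succ n ih =>
          rcases eq_or_ne (W n) ⊤ with htop | htop
          · have hle := hmono n
            rw [htop] at hle
            exact Or.inr (top_le_iff.mp hle)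
          · rcases ih with h1 | h1
            · exact Or.inl (Nat.succ_le_of_lt (lt_of_le_of_lt h1
                (Submodule.finrank_lt_finrank_of_lt (hgrow n htop))))
            · exact absurd h1 htop
      set N := finrank k (G → k) with hNdef
      have hWN : W N = ⊤ := by
        rcases hkey N with h1 | h1
        · exact Submodule.eq_top_of_finrank_eq (le_antisymm (Submodule.finrank_le _) h1)
        · exact h1
      refine ⟨N, fun i => W (i : ℕ), hW0, ?_, ?_, ?_⟩
      · show W ((Fin.last N : Fin (N + 1)) : ℕ) = ⊤
        rw [Fin.val_last]
        exact hWN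
      · have hm : Monotone W := monotone_nat_of_le_succ hmono
        exact fun i j hij => hm hij
      · intro g0 i v hv
        have hv1 : v ∈ W ((i.succ : Fin (N + 1)) : ℕ) := hv
        rw [Fin.val_succ] at hv1
        rw [hWsucc] at hv1
        show (ρ g0) v - v ∈ W ((i.castSucc : Fin (N + 1)) : ℕ)
        rw [Fin.coe_castSucc]
        exact hv1 g0
end
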